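/- Let B ≥ 1 and ω > 0, ω ≠ 1. Define h(x) = Π_{i=0}^{2B−2}(x − ω^i), let f¹ be the sum of the odd-degree terms of h and f² the negative of the sum of the even-degree terms of h. Then h = f¹ − f², both f¹ and f² have at most B nonzero terms, and f¹(ω^i) = f²(ω^i) for i = 0, 1, …, 2B − 2. -/
import Mathlib


open Polynomial Finset

/-- With `h = Π_{i=0}^{2B-2} (x - ω^i)`, the odd part `f¹` and the negated even
part `f²` of `h` satisfy `h = f¹ - f²`, each has at most `B` terms, and
`f¹(ω^i) = f²(ω^i)` for `i = 0, …, 2B-2`. -/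
theorem stmt13 (B : ℕ) (hB : 1 ≤ B) (ω : ℝ) (hω : 0 < ω) (hω1 : ω ≠ 1)
    (h f₁ f₂ : ℝ[X])
    (hh : h = ∏ i ∈ range (2 * B - 1), (X - C (ω ^ i)))
    (hf₁ : ∀ n, f₁.coeff n = if Odd n then h.coeff n else 0)
    (hf₂ : ∀ n, f₂.coeff n = if Even n then -(h.coeff n) else 0) :
    h = f₁ - f₂ ∧
    f₁.support.card ≤ B ∧
    f₂.support.card ≤ B ∧
    ∀ i : ℕ, i ≤ 2 * B - 2 → f₁.eval (ω ^ i) = f₂.eval (ω ^ i) := by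
  have hdeg : h.natDegree ≤ 2 * B - 1 := by
    rw [hh]
    refine le_trans (natDegree_prod_le _ _) ?_
    simp only [natDegree_X_sub_C, sum_const, smul_eq_mul, mul_one, card_range, le_refl]
  have heq : h = f₁ - f₂ := by
    ext n
    rw [coeff_sub, hf₁ n, hf₂ n]
    rcases Nat.even_or_odd n with he | ho
    · rw [if_neg (Nat.not_odd_iff_even.mpr he), if_pos he]; ring
    · rw [if_pos ho, if_neg (Nat.not_even_iff_odd.mpr ho)]; ring
  refine ⟨heq, ?_, ?_, ?_⟩
  · have h1 : f₁.support ⊆ (range B).image (fun k => 2 * k + 1) := by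
      intro n hn
      rw [mem_support_iff, hf₁] at hn
      by_cases ho : Odd n
      · obtain ⟨k, hk⟩ := ho
        have ho' : Odd n := ⟨k, hk⟩
        have hne : h.coeff n ≠ 0 := by simpa [ho'] using hn
        have hle : n ≤ h.natDegree := le_natDegree_of_ne_zero hne
        simp only [mem_image, mem_range]
        exact ⟨k, by omega, by omega⟩
      · simp [ho] at hn
    exact le_trans (card_le_card h1) (le_trans card_image_le (by simp))
  · have h2 : f₂.support ⊆ (range B).image (fun k => 2 * k) := by
      intro n hn
      rw [mem_support_iff, hf₂] at hn
      by_cases he : Even n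
      · obtain ⟨k, hk⟩ := he
        have he' : Even n := ⟨k, hk⟩
        have hne : h.coeff n ≠ 0 := by simpa [he'] using hn
        have hle : n ≤ h.natDegree := le_natDegree_of_ne_zero hne
        simp only [mem_image, mem_range]
        exact ⟨k, by omega, by omega⟩
      · simp [he] at hn
    exact le_trans (card_le_card h2) (le_trans card_image_le (by simp))
  · intro i hi
    have hz : h.eval (ω ^ i) = 0 := by
      rw [hh, eval_prod]
      exact Finset.prod_eq_zero (i := i) (mem_range.mpr (by omega)) (by simp)
    have h0 : f₁.eval (ω ^ i) - f₂.eval (ω ^ i) = 0 := by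
      rw [← eval_sub, ← heq]; exact hz
    linarith
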